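/- Let G be a bipartite graph and D a set of guards with |D| = g. If t_G(D) < +∞, then t_G(D) ≤ g + 1. -/

import Mathlib

/-- Attacker wins within `t` turns in the mobile domination game. -/
def AttackerWinsIn {V : Type*} [DecidableEq V] (G : SimpleGraph V) :
    ℕ → Finset V → Prop
  | 0, _ => False
  | (t + 1), D => ∃ v, v ∉ D ∧
      ∀ u ∈ D, G.Adj u v → AttackerWinsIn G t (insert v (D.erase u))

/-- `t_G(D)`, the minimum number of turns in which Attacker can force a win. -/
noncomputable def gameValue {V : Type*} [DecidableEq V] (G : SimpleGraph V)
    (D : Finset V) : ℕ∞ :=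
  sInf {n : ℕ∞ | ∃ t : ℕ, n = (t : ℕ∞) ∧ AttackerWinsIn G t D}

/-- An injective map from `S` to `T` along edges of `G`. -/
def GoodMatch {V : Type*} (G : SimpleGraph V) (S T : Set V) : Prop :=
  ∃ f : V → V, Set.InjOn f S ∧ ∀ x ∈ S, f x ∈ T ∧ G.Adj x (f x)

section Aux

variable {V : Type*} [DecidableEq V] {G : SimpleGraph V} {A B : Set V}

lemma adj_mem_B (hpart : ∀ v, v ∈ A ↔ v ∉ B)
    (hbip : ∀ u v, G.Adj u v → (u ∈ A ∧ v ∈ B) ∨ (u ∈ B ∧ v ∈ A))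
    {u v : V} (hadj : G.Adj u v) (hvA : v ∈ A) : u ∈ B := by
  rcases hbip u v hadj with ⟨_, hvB⟩ | ⟨huB, _⟩
  · exact absurd hvB ((hpart v).mp hvA)
  · exact huB

/-- If the A-side matching fails, Attacker wins in `|D ∩ B| + 1` attacks. -/
lemma attacker_side (hpart : ∀ v, v ∈ A ↔ v ∉ B)
    (hbip : ∀ u v, G.Adj u v → (u ∈ A ∧ v ∈ B) ∨ (u ∈ B ∧ v ∈ A)) :
    ∀ n (D : Finset V), ((D : Set V) ∩ B).ncard = n →
      ¬ GoodMatch G (A \ ↑D) (↑D ∩ B) → AttackerWinsIn G (n + 1) D := by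
  intro n
  induction n with
  | zero =>
    intro D hcard hno
    have hne : (A \ (D : Set V)).Nonempty := by
      by_contra h
      rw [Set.not_nonempty_iff_eq_empty] at h
      exact hno ⟨id, by simp [h, Set.InjOn]⟩
    obtain ⟨v, hvA, hvD⟩ := hne
    refine ⟨v, by simpa using hvD, ?_⟩
    intro u hu hadj
    exfalso
    have huB : u ∈ B := adj_mem_B hpart hbip hadj hvA
    have hfin : ((D : Set V) ∩ B).Finite := D.finite_toSet.inter_of_left B
    have : ((D : Set V) ∩ B) = ∅ := (Set.ncard_eq_zero hfin).mp hcard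
    exact absurd (this ▸ ⟨hu, huB⟩ : u ∈ (∅ : Set V)) (Set.notMem_empty u)
  | succ n ih =>
    intro D hcard hno
    have hne : (A \ (D : Set V)).Nonempty := by
      by_contra h
      rw [Set.not_nonempty_iff_eq_empty] at h
      exact hno ⟨id, by simp [h, Set.InjOn]⟩
    obtain ⟨v, hvA, hvD⟩ := hne
    have hvB : v ∉ B := (hpart v).mp hvA
    refine ⟨v, by simpa using hvD, ?_⟩
    intro u hu hadj
    have huB : u ∈ B := adj_mem_B hpart hbip hadj hvA
    set D' : Finset V := insert v (D.erase u) with hD'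
    have hsetD' : ((D' : Set V) ∩ B) = ((D : Set V) ∩ B) \ {u} := by
      ext x
      simp only [hD', Finset.coe_insert, Finset.coe_erase, Set.mem_inter_iff,
        Set.mem_insert_iff, Set.mem_diff, Set.mem_singleton_iff]
      constructor
      · rintro ⟨hx, hxB⟩
        rcases hx with rfl | ⟨hxD, hxu⟩
        · exact absurd hxB hvB
        · exact ⟨⟨hxD, hxB⟩, hxu⟩
      · rintro ⟨⟨hxD, hxB⟩, hxu⟩
        exact ⟨Or.inr ⟨hxD, hxu⟩, hxB⟩
    apply ih D'
    · have hmem : u ∈ ((D : Set V) ∩ B) := ⟨hu, huB⟩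
      rw [hsetD', Set.ncard_diff_singleton_of_mem hmem, hcard]
      omega
    · rintro ⟨f, finj, hf⟩
      apply hno
      have huD' : u ∉ (D' : Set V) := by
        intro h
        rw [hD'] at h
        simp only [Finset.coe_insert, Set.mem_insert_iff, Finset.mem_coe] at h
        rcases h with rfl | h
        · exact hvB huB
        · exact (Finset.mem_erase.mp h).1 rfl
      have hsub : ∀ z, z ∈ A \ (D : Set V) → z ≠ v → z ∈ A \ (D' : Set V) := by
        intro z hz hzv
        refine ⟨hz.1, ?_⟩
        simp only [hD', Finset.coe_insert, Set.mem_insert_iff, Finset.coe_erase,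
          Set.mem_diff, Set.mem_singleton_iff]
        rintro (rfl | ⟨hzD, _⟩)
        · exact hzv rfl
        · exact hz.2 hzD
      have hfmem : ∀ z, z ∈ A \ (D' : Set V) →
          f z ∈ (D' : Set V) ∧ f z ∈ B ∧ G.Adj z (f z) := by
        intro z hz
        obtain ⟨⟨h1, h2⟩, h3⟩ := hf z hz
        exact ⟨h1, h2, h3⟩
      have hfneu : ∀ z, z ∈ A \ (D' : Set V) → f z ≠ u := by
        intro z hz h
        exact huD' (h ▸ (hfmem z hz).1)
      refine ⟨Function.update f v u, ?_, ?_⟩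
      · intro x hx y hy hxy
        by_cases hxv : x = v
        · by_cases hyv : y = v
          · rw [hxv, hyv]
          · exfalso
            rw [hxv, Function.update_self, Function.update_of_ne hyv] at hxy
            exact hfneu y (hsub y hy hyv) hxy.symm
        · by_cases hyv : y = v
          · exfalso
            rw [hyv, Function.update_self, Function.update_of_ne hxv] at hxy
            exact hfneu x (hsub x hx hxv) hxy
          · rw [Function.update_of_ne hxv, Function.update_of_ne hyv] at hxy
            exact finj (hsub x hx hxv) (hsub y hy hyv) hxy
      · intro x hx
        by_cases hxv : x = v
        · subst hxv
          rw [Function.update_self]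
          exact ⟨⟨hu, huB⟩, hadj.symm⟩
        · rw [Function.update_of_ne hxv]
          have hx' := hsub x hx hxv
          obtain ⟨h1, h2, h3⟩ := hfmem x hx'
          refine ⟨⟨?_, h2⟩, h3⟩
          have hfv : f x ≠ v := fun h => hvB (h ▸ h2)
          simp only [hD', Finset.coe_insert, Set.mem_insert_iff, Finset.coe_erase,
            Set.mem_diff, Set.mem_singleton_iff] at h1
          rcases h1 with h | ⟨hD, _⟩
          · exact absurd h hfv
          · exact hD

/-- One defender step: from a position with both matchings, any attack has a
response preserving both matchings. -/
lemma defender_step (hpart : ∀ v, v ∈ A ↔ v ∉ B)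
    (hbip : ∀ u v, G.Adj u v → (u ∈ A ∧ v ∈ B) ∨ (u ∈ B ∧ v ∈ A))
    (D : Finset V) (v : V) (hvA : v ∈ A) (hvD : v ∉ D)
    (hA : GoodMatch G (A \ ↑D) (↑D ∩ B)) (hB : GoodMatch G (B \ ↑D) (↑D ∩ A)) :
    ∃ u ∈ D, G.Adj u v ∧
      GoodMatch G (A \ ↑(insert v (D.erase u))) (↑(insert v (D.erase u)) ∩ B) ∧
      GoodMatch G (B \ ↑(insert v (D.erase u))) (↑(insert v (D.erase u)) ∩ A) := by
  obtain ⟨f, finj, hf⟩ := hA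
  obtain ⟨g, ginj, hg⟩ := hB
  have hv' : v ∈ A \ (D : Set V) := ⟨hvA, hvD⟩
  obtain ⟨⟨huD, huB⟩, hadj⟩ := hf v hv'
  set u := f v with hu
  refine ⟨u, huD, hadj.symm, ?_, ?_⟩
  · -- A-side matching: restrict f
    set D' : Finset V := insert v (D.erase u)
    have hsub : A \ (D' : Set V) ⊆ (A \ (D : Set V)) \ {v} := by
      intro x hx
      have hxB : x ∉ B := (hpart x).mp hx.1
      have hxu : x ≠ u := fun h => hxB (h ▸ huB)
      have hxv : x ≠ v := by
        intro h; exact hx.2 (by simp [D', h])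
      refine ⟨⟨hx.1, fun hxD => hx.2 ?_⟩, hxv⟩
      simp only [D', Finset.coe_insert, Set.mem_insert_iff, Finset.coe_erase,
        Set.mem_diff, Set.mem_singleton_iff]
      exact Or.inr ⟨hxD, hxu⟩
    refine ⟨f, finj.mono (hsub.trans Set.diff_subset), ?_⟩
    intro x hx
    have hx0 := hsub hx
    obtain ⟨⟨hfD, hfB⟩, hfadj⟩ := hf x hx0.1
    have hfu : f x ≠ u := fun h => hx0.2 (finj hx0.1 hv' h)
    refine ⟨⟨?_, hfB⟩, hfadj⟩
    simp only [D', Finset.coe_insert, Set.mem_insert_iff, Finset.coe_erase,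
      Set.mem_diff, Set.mem_singleton_iff]
    exact Or.inr ⟨hfD, hfu⟩
  · -- B-side matching: extend g by u ↦ v
    set D' : Finset V := insert v (D.erase u)
    have hvD' : (v : V) ∈ (D' : Set V) := by simp [D']
    have hmem : ∀ x, x ∈ B \ (D' : Set V) → x = u ∨ x ∈ B \ (D : Set V) := by
      intro x hx
      by_cases hxu : x = u
      · exact Or.inl hxu
      · refine Or.inr ⟨hx.1, fun hxD => hx.2 ?_⟩
        simp only [D', Finset.coe_insert, Set.mem_insert_iff, Finset.coe_erase,
          Set.mem_diff, Set.mem_singleton_iff]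
        exact Or.inr ⟨hxD, hxu⟩
    refine ⟨Function.update g u v, ?_, ?_⟩
    · intro x hx y hy hxy
      by_cases hxu : x = u
      · by_cases hyu : y = u
        · rw [hxu, hyu]
        · exfalso
          rw [hxu, Function.update_self, Function.update_of_ne hyu] at hxy
          rcases hmem y hy with h | h
          · exact hyu h
          · have := (hg y h).1
            rw [← hxy] at this
            exact hvD this.1
      · by_cases hyu : y = u
        · exfalso
          rw [hyu, Function.update_self, Function.update_of_ne hxu] at hxy
          rcases hmem x hx with h | h
          · exact hxu h
          · have := (hg x h).1
            rw [hxy] at this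
            exact hvD this.1
        · rw [Function.update_of_ne hxu, Function.update_of_ne hyu] at hxy
          rcases hmem x hx with h | hx'
          · exact absurd h hxu
          rcases hmem y hy with h | hy'
          · exact absurd h hyu
          exact ginj hx' hy' hxy
    · intro x hx
      by_cases hxu : x = u
      · subst hxu
        rw [Function.update_self]
        exact ⟨⟨hvD', hvA⟩, hadj.symm⟩
      · rw [Function.update_of_ne hxu]
        rcases hmem x hx with h | hx'
        · exact absurd h hxu
        obtain ⟨⟨hgD, hgA⟩, hgadj⟩ := hg x hx'
        have hgu : g x ≠ u := fun h => ((hpart (g x)).mp hgA) (h ▸ huB)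
        refine ⟨⟨?_, hgA⟩, hgadj⟩
        simp only [D', Finset.coe_insert, Set.mem_insert_iff, Finset.coe_erase,
          Set.mem_diff, Set.mem_singleton_iff]
        exact Or.inr ⟨hgD, hgu⟩

/-- If both matchings exist, Defender survives forever. -/
lemma defender_safe (hpart : ∀ v, v ∈ A ↔ v ∉ B)
    (hbip : ∀ u v, G.Adj u v → (u ∈ A ∧ v ∈ B) ∨ (u ∈ B ∧ v ∈ A)) :
    ∀ t (D : Finset V), GoodMatch G (A \ ↑D) (↑D ∩ B) →
      GoodMatch G (B \ ↑D) (↑D ∩ A) → ¬ AttackerWinsIn G t D := by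
  have hpart' : ∀ v, v ∈ B ↔ v ∉ A := by
    intro v
    constructor
    · intro hB hA; exact (hpart v).mp hA hB
    · intro hA; by_contra hB; exact hA ((hpart v).mpr hB)
  have hbip' : ∀ u v, G.Adj u v → (u ∈ B ∧ v ∈ A) ∨ (u ∈ A ∧ v ∈ B) :=
    fun u v h => (hbip u v h).symm
  intro t
  induction t with
  | zero => intro D _ _ h; exact h
  | succ t ih =>
    rintro D hA hB ⟨v, hvD, hresp⟩
    have hvD' : v ∉ (D : Set V) := by simpa using hvD
    by_cases hvA : v ∈ A
    · obtain ⟨u, huD, huadj, hA', hB'⟩ :=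
        defender_step hpart hbip D v hvA hvD' hA hB
      exact ih _ hA' hB' (hresp u huD huadj)
    · have hvB : v ∈ B := (hpart' v).mpr hvA
      obtain ⟨u, huD, huadj, hB', hA'⟩ :=
        defender_step hpart' hbip' D v hvB hvD' hB hA
      exact ih _ hA' hB' (hresp u huD huadj)

end Aux

/-- If `G` is a bipartite graph and `D` a set of `g` guards with `t_G(D) < +∞`,
then `t_G(D) ≤ g + 1`. -/
theorem stmt3 {V : Type*} [DecidableEq V] (G : SimpleGraph V) (A B : Set V)
    (hpart : ∀ v, v ∈ A ↔ v ∉ B)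
    (hbip : ∀ u v, G.Adj u v → (u ∈ A ∧ v ∈ B) ∨ (u ∈ B ∧ v ∈ A))
    (D : Finset V) (g : ℕ) (hg : D.card = g)
    (hfin : gameValue G D ≠ ⊤) :
    gameValue G D ≤ (g : ℕ∞) + 1 := by
  classical
  have hpart' : ∀ v, v ∈ B ↔ v ∉ A := by
    intro v
    constructor
    · intro hB hA; exact (hpart v).mp hA hB
    · intro hA; by_contra hB; exact hA ((hpart v).mpr hB)
  have hbip' : ∀ u v, G.Adj u v → (u ∈ B ∧ v ∈ A) ∨ (u ∈ A ∧ v ∈ B) :=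
    fun u v h => (hbip u v h).symm
  -- extract a winning time from hfin
  have hwin : ∃ t : ℕ, AttackerWinsIn G t D := by
    by_contra h
    push_neg at h
    apply hfin
    have : {n : ℕ∞ | ∃ t : ℕ, n = (t : ℕ∞) ∧ AttackerWinsIn G t D} = ∅ := by
      ext n; simp only [Set.mem_setOf_eq, Set.mem_empty_iff_false, iff_false]
      rintro ⟨t, _, ht⟩; exact h t ht
    rw [gameValue, this, sInf_empty]
  obtain ⟨t, ht⟩ := hwin
  have hnot : ¬ (GoodMatch G (A \ ↑D) (↑D ∩ B) ∧ GoodMatch G (B \ ↑D) (↑D ∩ A)) := by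
    rintro ⟨hA, hB⟩
    exact defender_safe hpart hbip t D hA hB ht
  have hle : ∀ n : ℕ, AttackerWinsIn G n D → gameValue G D ≤ (n : ℕ∞) :=
    fun n hn => sInf_le ⟨n, rfl, hn⟩
  rw [not_and_or] at hnot
  rcases hnot with hnA | hnB
  · have hwin' := attacker_side hpart hbip (((D : Set V) ∩ B).ncard) D rfl hnA
    refine le_trans (hle _ hwin') ?_
    have hcard : ((D : Set V) ∩ B).ncard ≤ g := by
      calc ((D : Set V) ∩ B).ncard ≤ (D : Set V).ncard :=
            Set.ncard_le_ncard Set.inter_subset_left D.finite_toSet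
        _ = g := by rw [Set.ncard_coe_finset, hg]
    have : ((((D : Set V) ∩ B).ncard + 1 : ℕ) : ℕ∞) ≤ ((g + 1 : ℕ) : ℕ∞) := by
      exact_mod_cast Nat.succ_le_succ hcard
    simpa using this
  · have hwin' := attacker_side hpart' hbip' (((D : Set V) ∩ A).ncard) D rfl hnB
    refine le_trans (hle _ hwin') ?_
    have hcard : ((D : Set V) ∩ A).ncard ≤ g := by
      calc ((D : Set V) ∩ A).ncard ≤ (D : Set V).ncard :=
            Set.ncard_le_ncard Set.inter_subset_left D.finite_toSet
        _ = g := by rw [Set.ncard_coe_finset, hg]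
    have : ((((D : Set V) ∩ A).ncard + 1 : ℕ) : ℕ∞) ≤ ((g + 1 : ℕ) : ℕ∞) := by
      exact_mod_cast Nat.succ_le_succ hcard
    simpa using this
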